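/- Let (X_1,Y_1), …, (X_n,Y_n) (n ≥ 3) be i.i.d. with law P_{XY}, and let (X_i',Y_i') be the cyclic permutation of the sample. Let θ̂: 𝒳×𝒴 → [0,1] be a fixed measurable function such that θ̂(X,Y) has an atomless distribution under both P_{XY} and P_X×P_Y. Define R = n^{-2} Σ_{i,j=1}^n 1{θ̂(X_i,Y_i) < θ̂(X_j',Y_j')} and the projection R_μ = n^{-1} Σ_{i=1}^n [1 − F₂(θ̂(X_i,Y_i)) − μ*] + n^{-1} Σ_{i=1}^n [F₁(θ̂(X_i',Y_i')) − μ*]. Then there is a universal constant C such that E[(R − μ* − R_μ)²] ≤ C·n^{-2}. -/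

import Mathlib

set_option maxHeartbeats 2000000


open MeasureTheory ProbabilityTheory

/-- The cyclic successor of an index. -/
def cycIdx {n : ℕ} (i : Fin n) : Fin n := ⟨(i.val + 1) % n, Nat.mod_lt _ i.pos⟩

/-- The cyclicly permuted sample: `(Xᵢ', Yᵢ') = (Xᵢ, Y_{i+1})` (indices mod `n`). -/
def cyc {X Y : Type*} {n : ℕ} (Z : Fin n → X × Y) (i : Fin n) : X × Y :=
  ((Z i).1, (Z (cycIdx i)).2)

/-- Cumulative distribution function of `θ` under the measure `m`. -/
noncomputable def cdfOf {X Y : Type*} [MeasurableSpace X] [MeasurableSpace Y]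
    (m : Measure (X × Y)) (θ : X × Y → ℝ) (t : ℝ) : ℝ := (m {z | θ z ≤ t}).toReal

/-- The rank-sum statistic `R = n⁻² Σ_{i,j} 1{θ(Xᵢ,Yᵢ) < θ(Xⱼ',Yⱼ')}`. -/
noncomputable def Rstat {X Y : Type*} {n : ℕ} (θ : X × Y → ℝ) (Z : Fin n → X × Y) : ℝ :=
  ((n : ℝ) ^ 2)⁻¹ * ∑ i : Fin n, ∑ j : Fin n, if θ (Z i) < θ (cyc Z j) then (1 : ℝ) else 0

/-- The Hoeffding projection
`R_μ = n⁻¹ Σᵢ (1 − F₂(θ(Xᵢ,Yᵢ)) − μ*) + n⁻¹ Σᵢ (F₁(θ(Xᵢ',Yᵢ')) − μ*)`. -/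
noncomputable def Rproj {X Y : Type*} {n : ℕ} (θ : X × Y → ℝ) (F₁ F₂ : ℝ → ℝ) (μs : ℝ)
    (Z : Fin n → X × Y) : ℝ :=
  (n : ℝ)⁻¹ * (∑ i : Fin n, (1 - F₂ (θ (Z i)) - μs))
    + (n : ℝ)⁻¹ * ∑ i : Fin n, (F₁ (θ (cyc Z i)) - μs)


section
-- ===== auxiliary lemmas =====
section Aux

lemma integrable_of_bound {α : Type*} [MeasurableSpace α] (m : Measure α) [IsFiniteMeasure m]
    {f : α → ℝ} (c : ℝ) (hm : AEStronglyMeasurable f m) (hb : ∀ x, |f x| ≤ c) :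
    Integrable f m :=
  (integrable_const c).mono' hm (Filter.Eventually.of_forall (by simpa using hb))

lemma nonempty_of_prob {E : Type*} [MeasurableSpace E] (μ : Measure E)
    [IsProbabilityMeasure μ] : Nonempty E := by
  by_contra h
  rw [not_nonempty_iff] at h
  have := measure_univ (μ := μ)
  simp [Set.univ_eq_empty_iff.2 h] at this

end Aux

section Vanish
variable {E : Type*} [MeasurableSpace E] (μ : Measure E) [IsProbabilityMeasure μ] {n : ℕ}

lemma vanish_single (i : Fin n) (Φ : E → (Fin n → E) → ℝ)
    (hΦ : Measurable fun q : E × (Fin n → E) => Φ q.1 q.2) (c : ℝ)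
    (hb : ∀ z ω, |Φ z ω| ≤ c)
    (hdep : ∀ z ω ω', (∀ x, x ≠ i → ω x = ω' x) → Φ z ω = Φ z ω')
    (h0 : ∀ ω, ∫ z, Φ z ω ∂μ = 0) :
    ∫ ω, Φ (ω i) ω ∂(Measure.pi fun _ : Fin n => μ) = 0 := by
  classical
  obtain ⟨z₀⟩ : Nonempty E := nonempty_of_prob μ
  letI uniqI : Unique (Subtype (fun x : Fin n => x = i)) := ⟨⟨⟨i, rfl⟩⟩, fun x => Subtype.ext x.2⟩
  letI fI : Fintype (Subtype (fun x : Fin n => x = i)) := Subtype.fintype _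
  have hmp := measurePreserving_piEquivPiSubtypeProd (fun _ : Fin n => μ) (fun x => x = i)
  have hGmeas : Measurable (fun q : ((Subtype (fun x : Fin n => x = i) → E) ×
        ({x : Fin n // ¬ x = i} → E)) => Φ (q.1 default)
        ((MeasurableEquiv.piEquivPiSubtypeProd (fun _ : Fin n => E) (fun x => x = i)).symm q)) :=
    by
      have h2 : Measurable (fun q : ((Subtype (fun x : Fin n => x = i) → E) ×
          ({x : Fin n // ¬ x = i} → E)) => ((q.1 default : E),
          ((MeasurableEquiv.piEquivPiSubtypeProd (fun _ : Fin n => E)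
            (fun x => x = i)).symm q : Fin n → E))) :=
        (measurable_pi_apply _ |>.comp measurable_fst).prodMk (MeasurableEquiv.measurable _)
      exact hΦ.comp h2
  have hGint : Integrable (fun q : ((Subtype (fun x : Fin n => x = i) → E) ×
        ({x : Fin n // ¬ x = i} → E)) => Φ (q.1 default)
        ((MeasurableEquiv.piEquivPiSubtypeProd (fun _ : Fin n => E) (fun x => x = i)).symm q))
      ((Measure.pi fun _ => μ).prod (Measure.pi fun _ => μ)) :=
    integrable_of_bound _ c hGmeas.aestronglyMeasurable (fun q => hb _ _)
  calc ∫ ω, Φ (ω i) ω ∂(Measure.pi fun _ : Fin n => μ)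
      = ∫ ω, (fun q : ((Subtype (fun x : Fin n => x = i) → E) ×
            ({x : Fin n // ¬ x = i} → E)) => Φ (q.1 default)
            ((MeasurableEquiv.piEquivPiSubtypeProd (fun _ : Fin n => E) (fun x => x = i)).symm q))
          ((MeasurableEquiv.piEquivPiSubtypeProd (fun _ : Fin n => E) (fun x => x = i)) ω)
          ∂(Measure.pi fun _ : Fin n => μ) := by
        congr 1; ext ω
        simp only [MeasurableEquiv.symm_apply_apply]
        rfl
    _ = ∫ q, Φ (q.1 default)
          ((MeasurableEquiv.piEquivPiSubtypeProd (fun _ : Fin n => E) (fun x => x = i)).symm q)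
          ∂((Measure.pi fun _ => μ).prod (Measure.pi fun _ => μ)) := by
        exact hmp.integral_comp' (fun q => Φ (q.1 default)
          ((MeasurableEquiv.piEquivPiSubtypeProd (fun _ : Fin n => E)
            (fun x => x = i)).symm q))
    _ = ∫ b, ∫ a, Φ (a default)
          ((MeasurableEquiv.piEquivPiSubtypeProd (fun _ : Fin n => E)
            (fun x => x = i)).symm (a, b))
          ∂(Measure.pi fun _ => μ) ∂(Measure.pi fun _ => μ) := integral_prod_symm _ hGint
    _ = 0 := by
        rw [← integral_zero ({x : Fin n // ¬ x = i} → E) ℝ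
          (μ := (Measure.pi fun _ => μ : Measure (({x : Fin n // ¬ x = i} → E))))]
        congr 1; ext b
        have key : ∀ a : Subtype (fun x : Fin n => x = i) → E,
            Φ (a default) ((MeasurableEquiv.piEquivPiSubtypeProd (fun _ : Fin n => E)
              (fun x => x = i)).symm (a, b))
            = Φ (a default) ((MeasurableEquiv.piEquivPiSubtypeProd (fun _ : Fin n => E)
              (fun x => x = i)).symm (fun _ => z₀, b)) := by
          intro a
          refine hdep _ _ _ ?_
          intro x hx
          show (Equiv.piEquivPiSubtypeProd (fun x : Fin n => x = i) (fun _ => E)).symm (a, b) x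
            = (Equiv.piEquivPiSubtypeProd (fun x : Fin n => x = i) (fun _ => E)).symm
              (fun _ => z₀, b) x
          rw [Equiv.piEquivPiSubtypeProd_symm_apply, Equiv.piEquivPiSubtypeProd_symm_apply,
            dif_neg hx, dif_neg hx]
        calc ∫ a, Φ (a default) ((MeasurableEquiv.piEquivPiSubtypeProd (fun _ : Fin n => E)
              (fun x => x = i)).symm (a, b)) ∂(Measure.pi fun _ => μ)
            = ∫ a : Subtype (fun x : Fin n => x = i) → E, Φ (a default)
              ((MeasurableEquiv.piEquivPiSubtypeProd (fun _ : Fin n => E)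
                (fun x => x = i)).symm (fun _ => z₀, b)) ∂(Measure.pi fun _ => μ) := by
              congr 1; ext a; rw [key]
          _ = ∫ z, Φ z ((MeasurableEquiv.piEquivPiSubtypeProd (fun _ : Fin n => E)
                (fun x => x = i)).symm (fun _ => z₀, b)) ∂μ := by
              have hbr : (Measure.pi (fun _ : Subtype (fun x : Fin n => x = i) => μ))
                  = @Measure.pi _ (fun _ => E) Unique.fintype (fun _ => inferInstance)
                    (fun _ => μ) := by
                congr 1
                exact Subsingleton.elim _ _
              rw [hbr]
              exact (measurePreserving_funUnique μ
                (Subtype (fun x : Fin n => x = i))).integral_comp'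
                (fun z => Φ z ((MeasurableEquiv.piEquivPiSubtypeProd (fun _ : Fin n => E)
                  (fun x => x = i)).symm (fun _ => z₀, b)))
          _ = 0 := h0 _

lemma vanish_pair (j j' : Fin n) (hne : j ≠ j') (Φ : E → E → (Fin n → E) → ℝ)
    (hΦ : Measurable fun q : (E × E) × (Fin n → E) => Φ q.1.1 q.1.2 q.2) (c : ℝ)
    (hb : ∀ z₁ z₂ ω, |Φ z₁ z₂ ω| ≤ c)
    (hdep : ∀ z₁ z₂ ω ω', (∀ x, x ≠ j → x ≠ j' → ω x = ω' x) → Φ z₁ z₂ ω = Φ z₁ z₂ ω')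
    (h0 : ∀ ω, ∫ q : E × E, Φ q.1 q.2 ω ∂(μ.prod μ) = 0) :
    ∫ ω, Φ (ω j) (ω j') ω ∂(Measure.pi fun _ : Fin n => μ) = 0 := by
  classical
  obtain ⟨z₀⟩ : Nonempty E := nonempty_of_prob μ
  letI fI : Fintype (Subtype (fun x : Fin n => x = j ∨ x = j')) := Subtype.fintype _
  set σ : Fin 2 ≃ Subtype (fun x : Fin n => x = j ∨ x = j') :=
    { toFun := fun x => if x = 0 then ⟨j, Or.inl rfl⟩ else ⟨j', Or.inr rfl⟩
      invFun := fun y => if y.1 = j then 0 else 1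
      left_inv := by
        intro x
        match x with
        | 0 => simp
        | 1 => simp [hne.symm]
      right_inv := by
        rintro ⟨y, (rfl | rfl)⟩
        · simp
        · simp [hne.symm] } with hσ
  have hσ0 : σ 0 = ⟨j, Or.inl rfl⟩ := by simp [hσ]
  have hσ1 : σ 1 = ⟨j', Or.inr rfl⟩ := by simp [hσ]
  have hmp := measurePreserving_piEquivPiSubtypeProd (fun _ : Fin n => μ)
    (fun x => x = j ∨ x = j')
  have hGmeas : Measurable (fun q : ((Subtype (fun x : Fin n => x = j ∨ x = j') → E) ×
        ({x : Fin n // ¬ (x = j ∨ x = j')} → E)) =>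
        Φ (q.1 ⟨j, Or.inl rfl⟩) (q.1 ⟨j', Or.inr rfl⟩)
        ((MeasurableEquiv.piEquivPiSubtypeProd (fun _ : Fin n => E)
          (fun x => x = j ∨ x = j')).symm q)) := by
    have h2 : Measurable (fun q : ((Subtype (fun x : Fin n => x = j ∨ x = j') → E) ×
        ({x : Fin n // ¬ (x = j ∨ x = j')} → E)) =>
        (((q.1 ⟨j, Or.inl rfl⟩ : E), (q.1 ⟨j', Or.inr rfl⟩ : E)),
          ((MeasurableEquiv.piEquivPiSubtypeProd (fun _ : Fin n => E)
            (fun x => x = j ∨ x = j')).symm q : Fin n → E))) :=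
      (((measurable_pi_apply _).comp measurable_fst).prodMk
        ((measurable_pi_apply _).comp measurable_fst)).prodMk (MeasurableEquiv.measurable _)
    exact hΦ.comp h2
  have hGint : Integrable (fun q : ((Subtype (fun x : Fin n => x = j ∨ x = j') → E) ×
        ({x : Fin n // ¬ (x = j ∨ x = j')} → E)) =>
        Φ (q.1 ⟨j, Or.inl rfl⟩) (q.1 ⟨j', Or.inr rfl⟩)
        ((MeasurableEquiv.piEquivPiSubtypeProd (fun _ : Fin n => E)
          (fun x => x = j ∨ x = j')).symm q))
      ((Measure.pi fun _ => μ).prod (Measure.pi fun _ => μ)) :=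
    integrable_of_bound _ c hGmeas.aestronglyMeasurable (fun q => hb _ _ _)
  calc ∫ ω, Φ (ω j) (ω j') ω ∂(Measure.pi fun _ : Fin n => μ)
      = ∫ ω, (fun q : ((Subtype (fun x : Fin n => x = j ∨ x = j') → E) ×
            ({x : Fin n // ¬ (x = j ∨ x = j')} → E)) =>
            Φ (q.1 ⟨j, Or.inl rfl⟩) (q.1 ⟨j', Or.inr rfl⟩)
            ((MeasurableEquiv.piEquivPiSubtypeProd (fun _ : Fin n => E)
              (fun x => x = j ∨ x = j')).symm q))
          ((MeasurableEquiv.piEquivPiSubtypeProd (fun _ : Fin n => E)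
            (fun x => x = j ∨ x = j')) ω) ∂(Measure.pi fun _ : Fin n => μ) := by
        congr 1; ext ω
        simp only [MeasurableEquiv.symm_apply_apply]
        rfl
    _ = ∫ q, Φ (q.1 ⟨j, Or.inl rfl⟩) (q.1 ⟨j', Or.inr rfl⟩)
          ((MeasurableEquiv.piEquivPiSubtypeProd (fun _ : Fin n => E)
            (fun x => x = j ∨ x = j')).symm q)
          ∂((Measure.pi fun _ => μ).prod (Measure.pi fun _ => μ)) := by
        exact hmp.integral_comp' (fun q => Φ (q.1 ⟨j, Or.inl rfl⟩) (q.1 ⟨j', Or.inr rfl⟩)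
          ((MeasurableEquiv.piEquivPiSubtypeProd (fun _ : Fin n => E)
            (fun x => x = j ∨ x = j')).symm q))
    _ = ∫ b, ∫ a, Φ (a ⟨j, Or.inl rfl⟩) (a ⟨j', Or.inr rfl⟩)
          ((MeasurableEquiv.piEquivPiSubtypeProd (fun _ : Fin n => E)
            (fun x => x = j ∨ x = j')).symm (a, b))
          ∂(Measure.pi fun _ => μ) ∂(Measure.pi fun _ => μ) := integral_prod_symm _ hGint
    _ = 0 := by
        rw [← integral_zero ({x : Fin n // ¬ (x = j ∨ x = j')} → E) ℝ
          (μ := (Measure.pi fun _ => μ :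
            Measure (({x : Fin n // ¬ (x = j ∨ x = j')} → E))))]
        congr 1; ext b
        have key : ∀ a : Subtype (fun x : Fin n => x = j ∨ x = j') → E,
            Φ (a ⟨j, Or.inl rfl⟩) (a ⟨j', Or.inr rfl⟩)
              ((MeasurableEquiv.piEquivPiSubtypeProd (fun _ : Fin n => E)
                (fun x => x = j ∨ x = j')).symm (a, b))
            = Φ (a ⟨j, Or.inl rfl⟩) (a ⟨j', Or.inr rfl⟩)
              ((MeasurableEquiv.piEquivPiSubtypeProd (fun _ : Fin n => E)
                (fun x => x = j ∨ x = j')).symm (fun _ => z₀, b)) := by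
          intro a
          refine hdep _ _ _ _ ?_
          intro x hx1 hx2
          have hpx : ¬ (x = j ∨ x = j') := by tauto
          show (Equiv.piEquivPiSubtypeProd (fun x : Fin n => x = j ∨ x = j')
            (fun _ => E)).symm (a, b) x
            = (Equiv.piEquivPiSubtypeProd (fun x : Fin n => x = j ∨ x = j')
              (fun _ => E)).symm (fun _ => z₀, b) x
          rw [Equiv.piEquivPiSubtypeProd_symm_apply, Equiv.piEquivPiSubtypeProd_symm_apply,
            dif_neg hpx, dif_neg hpx]
        calc ∫ a, Φ (a ⟨j, Or.inl rfl⟩) (a ⟨j', Or.inr rfl⟩)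
              ((MeasurableEquiv.piEquivPiSubtypeProd (fun _ : Fin n => E)
                (fun x => x = j ∨ x = j')).symm (a, b)) ∂(Measure.pi fun _ => μ)
            = ∫ a : Subtype (fun x : Fin n => x = j ∨ x = j') → E,
              Φ (a ⟨j, Or.inl rfl⟩) (a ⟨j', Or.inr rfl⟩)
              ((MeasurableEquiv.piEquivPiSubtypeProd (fun _ : Fin n => E)
                (fun x => x = j ∨ x = j')).symm (fun _ => z₀, b))
              ∂(Measure.pi fun _ => μ) := by
              congr 1; ext a; rw [key]
          _ = ∫ v : Fin 2 → E,
              Φ ((MeasurableEquiv.piCongrLeft (fun _ => E) σ) v ⟨j, Or.inl rfl⟩)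
                ((MeasurableEquiv.piCongrLeft (fun _ => E) σ) v ⟨j', Or.inr rfl⟩)
              ((MeasurableEquiv.piEquivPiSubtypeProd (fun _ : Fin n => E)
                (fun x => x = j ∨ x = j')).symm (fun _ => z₀, b))
              ∂(Measure.pi fun _ : Fin 2 => μ) := by
              exact ((measurePreserving_piCongrLeft
                (fun _ : Subtype (fun x : Fin n => x = j ∨ x = j') => μ) σ).integral_comp'
                (fun a => Φ (a ⟨j, Or.inl rfl⟩) (a ⟨j', Or.inr rfl⟩)
                ((MeasurableEquiv.piEquivPiSubtypeProd (fun _ : Fin n => E)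
                  (fun x => x = j ∨ x = j')).symm (fun _ => z₀, b)))).symm
          _ = ∫ v : Fin 2 → E, Φ (v 0) (v 1)
              ((MeasurableEquiv.piEquivPiSubtypeProd (fun _ : Fin n => E)
                (fun x => x = j ∨ x = j')).symm (fun _ => z₀, b))
              ∂(Measure.pi fun _ : Fin 2 => μ) := by
              congr 1; ext v
              rw [MeasurableEquiv.coe_piCongrLeft]
              rw [← hσ0, ← hσ1, Equiv.piCongrLeft_apply_apply, Equiv.piCongrLeft_apply_apply]
          _ = ∫ q : E × E, Φ q.1 q.2
              ((MeasurableEquiv.piEquivPiSubtypeProd (fun _ : Fin n => E)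
                (fun x => x = j ∨ x = j')).symm (fun _ => z₀, b)) ∂(μ.prod μ) := by
              exact (measurePreserving_piFinTwo (fun _ : Fin 2 => μ)).integral_comp'
                (fun q : E × E => Φ q.1 q.2
                ((MeasurableEquiv.piEquivPiSubtypeProd (fun _ : Fin n => E)
                  (fun x => x = j ∨ x = j')).symm (fun _ => z₀, b)))
          _ = 0 := h0 _

end Vanish
section Facts
variable {X Y : Type*} [MeasurableSpace X] [MeasurableSpace Y]
variable (μ : Measure (X × Y)) [IsProbabilityMeasure μ]
variable (θ : X × Y → ℝ)

lemma cdfOf_mono (hθ : Measurable θ) : Monotone (cdfOf μ θ) := by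
  intro t t' ht
  exact ENNReal.toReal_mono (measure_ne_top _ _)
    (measure_mono (fun z hz => le_trans hz ht))

lemma cdfOf_meas (hθ : Measurable θ) : Measurable (cdfOf μ θ) :=
  (cdfOf_mono μ θ hθ).measurable

lemma cdfOf_nonneg (t : ℝ) : 0 ≤ cdfOf μ θ t := ENNReal.toReal_nonneg

lemma cdfOf_le_one (t : ℝ) : cdfOf μ θ t ≤ 1 := by
  have h := prob_le_one (μ := μ) (s := {z | θ z ≤ t})
  calc cdfOf μ θ t ≤ (1 : ENNReal).toReal := ENNReal.toReal_mono ENNReal.one_ne_top h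
    _ = 1 := ENNReal.toReal_one

-- atomless: < equals ≤
lemma lt_eq_le_meas (hatom : ∀ t : ℝ, μ {z | θ z = t} = 0) (t : ℝ) :
    μ {z | θ z < t} = μ {z | θ z ≤ t} := by
  refine le_antisymm (measure_mono (fun z (hz : θ z < t) => (le_of_lt hz : θ z ≤ t))) ?_
  have hsub : {z | θ z ≤ t} ⊆ {z | θ z < t} ∪ {z | θ z = t} := by
    intro z (hz : θ z ≤ t)
    rcases lt_or_eq_of_le hz with h | h
    · exact Or.inl h
    · exact Or.inr h
  calc μ {z | θ z ≤ t} ≤ μ ({z | θ z < t} ∪ {z | θ z = t}) := measure_mono hsub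
    _ ≤ μ {z | θ z < t} + μ {z | θ z = t} := measure_union_le _ _
    _ = μ {z | θ z < t} := by rw [hatom t, add_zero]

-- complement: toReal of > set
lemma gt_toReal (ms : Measure (X × Y)) [IsProbabilityMeasure ms] (hθ : Measurable θ) (t : ℝ) :
    (ms {w | t < θ w}).toReal = 1 - cdfOf ms θ t := by
  have hc : {w | t < θ w} = {w | θ w ≤ t}ᶜ := by
    ext w; simp [not_le]
  have hset : MeasurableSet {w | θ w ≤ t} := measurableSet_le hθ measurable_const
  rw [hc, measure_compl hset (measure_ne_top _ _), measure_univ,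
    ENNReal.toReal_sub_of_le prob_le_one ENNReal.one_ne_top, ENNReal.toReal_one]
  rfl

-- integral of indicator of {θ < t}
lemma int_ind_lt (ms : Measure (X × Y)) [IsProbabilityMeasure ms] (hθ : Measurable θ) (t : ℝ) :
    ∫ z, (if θ z < t then (1 : ℝ) else 0) ∂ms = (ms {z | θ z < t}).toReal := by
  have hset : MeasurableSet {z | θ z < t} := measurableSet_lt hθ measurable_const
  have : (fun z => if θ z < t then (1 : ℝ) else 0) = Set.indicator {z | θ z < t} 1 := by
    funext z
    simp [Set.indicator_apply, Set.mem_setOf_eq]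
  rw [this, integral_indicator_one hset]
  rfl

lemma int_ind_gt (ms : Measure (X × Y)) [IsProbabilityMeasure ms] (hθ : Measurable θ) (t : ℝ) :
    ∫ w, (if t < θ w then (1 : ℝ) else 0) ∂ms = (ms {w | t < θ w}).toReal := by
  have hset : MeasurableSet {w | t < θ w} := measurableSet_lt measurable_const hθ
  have : (fun w => if t < θ w then (1 : ℝ) else 0) = Set.indicator {w | t < θ w} 1 := by
    funext w
    simp [Set.indicator_apply, Set.mem_setOf_eq]
  rw [this, integral_indicator_one hset]
  rfl

end Facts

section Fub
variable {X Y : Type*} [MeasurableSpace X] [MeasurableSpace Y]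
variable (μ ν : Measure (X × Y)) [IsProbabilityMeasure μ] [IsProbabilityMeasure ν]
variable (θ : X × Y → ℝ)

lemma hS_meas (hθ : Measurable θ) : MeasurableSet {p : (X × Y) × (X × Y) | θ p.1 < θ p.2} :=
  measurableSet_lt (Measurable.comp hθ measurable_fst) (Measurable.comp hθ measurable_snd)

lemma fub_left (hθ : Measurable θ) :
    ∫ z, (ν {w | θ z < θ w}).toReal ∂μ
      = ((μ.prod ν) {p : (X × Y) × (X × Y) | θ p.1 < θ p.2}).toReal := by
  have hS' : MeasurableSet {p : (X × Y) × (X × Y) | θ p.1 < θ p.2} := hS_meas θ hθ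
  rw [Measure.prod_apply hS']
  rw [← integral_toReal (measurable_measure_prodMk_left hS').aemeasurable
    (Filter.Eventually.of_forall (fun z => measure_lt_top ν _))]
  rfl

lemma fub_right (hθ : Measurable θ) :
    ∫ w, (μ {z | θ z < θ w}).toReal ∂ν
      = ((μ.prod ν) {p : (X × Y) × (X × Y) | θ p.1 < θ p.2}).toReal := by
  have hS' : MeasurableSet {p : (X × Y) × (X × Y) | θ p.1 < θ p.2} := hS_meas θ hθ
  rw [Measure.prod_apply_symm hS']
  rw [← integral_toReal (measurable_measure_prodMk_right hS').aemeasurable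
    (Filter.Eventually.of_forall (fun w => measure_lt_top μ _))]
  rfl

end Fub

noncomputable def Fker {X Y : Type*} [MeasurableSpace X] [MeasurableSpace Y]
    (μ ν : Measure (X × Y)) (θ : X × Y → ℝ) (μs : ℝ) (z w : X × Y) : ℝ :=
  (if θ z < θ w then (1 : ℝ) else 0) - (1 - cdfOf ν θ (θ z)) - cdfOf μ θ (θ w) + μs

section Ker
variable {X Y : Type*} [MeasurableSpace X] [MeasurableSpace Y]
variable (μ ν : Measure (X × Y)) [IsProbabilityMeasure μ] [IsProbabilityMeasure ν]
variable (θ : X × Y → ℝ) (μs : ℝ)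

lemma toReal_prob_le_one (m : Measure (X × Y)) [IsProbabilityMeasure m] (s : Set (X × Y)) :
    (m s).toReal ≤ 1 := by
  calc (m s).toReal ≤ (1 : ENNReal).toReal :=
        ENNReal.toReal_mono ENNReal.one_ne_top prob_le_one
    _ = 1 := ENNReal.toReal_one

lemma Fker_meas (hθ : Measurable θ) :
    Measurable (fun q : (X × Y) × (X × Y) => Fker μ ν θ μs q.1 q.2) := by
  unfold Fker
  have h1 : Measurable (fun q : (X × Y) × (X × Y) => (if θ q.1 < θ q.2 then (1 : ℝ) else 0)) :=
    Measurable.ite (measurableSet_lt (hθ.comp measurable_fst) (hθ.comp measurable_snd))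
      measurable_const measurable_const
  have h2 : Measurable (fun q : (X × Y) × (X × Y) => cdfOf ν θ (θ q.1)) :=
    (cdfOf_meas ν θ hθ).comp (hθ.comp measurable_fst)
  have h3 : Measurable (fun q : (X × Y) × (X × Y) => cdfOf μ θ (θ q.2)) :=
    (cdfOf_meas μ θ hθ).comp (hθ.comp measurable_snd)
  exact (((h1.sub (measurable_const.sub h2)).sub h3).add measurable_const)

lemma Fker_bound (h0 : 0 ≤ μs) (h1 : μs ≤ 1) (z w : X × Y) :
    |Fker μ ν θ μs z w| ≤ 4 := by
  unfold Fker
  have b1 : |(if θ z < θ w then (1 : ℝ) else 0)| ≤ 1 := by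
    split <;> simp
  have b2 : |1 - cdfOf ν θ (θ z)| ≤ 1 :=
    abs_le.2 ⟨by have := cdfOf_le_one ν θ (θ z); linarith,
      by have := cdfOf_nonneg ν θ (θ z); linarith⟩
  have b3 : |cdfOf μ θ (θ w)| ≤ 1 :=
    abs_le.2 ⟨by have := cdfOf_nonneg μ θ (θ w); linarith,
      cdfOf_le_one μ θ (θ w)⟩
  have b4 : |μs| ≤ 1 := abs_le.2 ⟨by linarith, h1⟩
  calc |(if θ z < θ w then (1 : ℝ) else 0) - (1 - cdfOf ν θ (θ z)) - cdfOf μ θ (θ w) + μs|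
      ≤ |(if θ z < θ w then (1 : ℝ) else 0) - (1 - cdfOf ν θ (θ z)) - cdfOf μ θ (θ w)| + |μs| :=
        abs_add_le _ _
    _ ≤ |(if θ z < θ w then (1 : ℝ) else 0) - (1 - cdfOf ν θ (θ z))| + |cdfOf μ θ (θ w)| + |μs| := by
        have := abs_sub (( if θ z < θ w then (1:ℝ) else 0) - (1 - cdfOf ν θ (θ z))) (cdfOf μ θ (θ w))
        linarith [abs_sub_abs_le_abs_sub ((if θ z < θ w then (1:ℝ) else 0) - (1 - cdfOf ν θ (θ z))) (cdfOf μ θ (θ w)), abs_sub ((if θ z < θ w then (1:ℝ) else 0) - (1 - cdfOf ν θ (θ z))) (cdfOf μ θ (θ w))]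
    _ ≤ (|(if θ z < θ w then (1 : ℝ) else 0)| + |1 - cdfOf ν θ (θ z)|) + |cdfOf μ θ (θ w)| + |μs| := by
        have := abs_sub ((if θ z < θ w then (1:ℝ) else 0)) (1 - cdfOf ν θ (θ z))
        linarith [abs_sub ((if θ z < θ w then (1:ℝ) else 0)) (1 - cdfOf ν θ (θ z))]
    _ ≤ 4 := by linarith

lemma factA (hθ : Measurable θ) (hatomμ : ∀ t : ℝ, μ {z | θ z = t} = 0)
    (hμs : μs = ((μ.prod ν) {p : (X × Y) × (X × Y) | θ p.1 < θ p.2}).toReal) (w : X × Y) :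
    ∫ z, Fker μ ν θ μs z w ∂μ = 0 := by
  have hint1 : Integrable (fun z => (if θ z < θ w then (1 : ℝ) else 0)) μ := by
    refine integrable_of_bound μ 1 ?_ ?_
    · exact (Measurable.ite (measurableSet_lt hθ measurable_const)
        measurable_const measurable_const).aestronglyMeasurable
    · intro z; split <;> simp
  have hint2 : Integrable (fun z => 1 - cdfOf ν θ (θ z)) μ := by
    refine integrable_of_bound μ 1 ?_ ?_
    · exact (measurable_const.sub ((cdfOf_meas ν θ hθ).comp hθ)).aestronglyMeasurable
    · intro z
      exact abs_le.2 ⟨by have := cdfOf_le_one ν θ (θ z); linarith,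
        by have := cdfOf_nonneg ν θ (θ z); linarith⟩
  have h1 : ∫ z, (if θ z < θ w then (1 : ℝ) else 0) ∂μ = cdfOf μ θ (θ w) := by
    rw [int_ind_lt θ μ hθ (θ w), lt_eq_le_meas μ θ hatomμ (θ w)]
    rfl
  have h2 : ∫ z, (1 - cdfOf ν θ (θ z)) ∂μ = μs := by
    have hpt : (fun z => 1 - cdfOf ν θ (θ z)) = fun z => (ν {w' | θ z < θ w'}).toReal := by
      funext z
      rw [gt_toReal θ ν hθ (θ z)]
    rw [hpt, fub_left μ ν θ hθ, ← hμs]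
  have hsplit : (fun z => Fker μ ν θ μs z w)
      = fun z => ((if θ z < θ w then (1 : ℝ) else 0) - (1 - cdfOf ν θ (θ z)))
        + (μs - cdfOf μ θ (θ w)) := by
    funext z; unfold Fker; ring
  have e2 : ∫ _z : X × Y, (μs - cdfOf μ θ (θ w)) ∂μ = μs - cdfOf μ θ (θ w) := by simp
  rw [hsplit]
  calc ∫ z, (((if θ z < θ w then (1 : ℝ) else 0) - (1 - cdfOf ν θ (θ z)))
          + (μs - cdfOf μ θ (θ w))) ∂μ
      = (∫ z, ((if θ z < θ w then (1 : ℝ) else 0) - (1 - cdfOf ν θ (θ z))) ∂μ)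
        + ∫ _z : X × Y, (μs - cdfOf μ θ (θ w)) ∂μ := by
        exact integral_add (hint1.sub hint2) (integrable_const _)
    _ = ((∫ z, (if θ z < θ w then (1 : ℝ) else 0) ∂μ) - ∫ z, (1 - cdfOf ν θ (θ z)) ∂μ)
        + ∫ _z : X × Y, (μs - cdfOf μ θ (θ w)) ∂μ := by
        exact congrArg (fun r => r + ∫ _z : X × Y, (μs - cdfOf μ θ (θ w)) ∂μ)
          (integral_sub hint1 hint2)
    _ = (cdfOf μ θ (θ w) - μs) + (μs - cdfOf μ θ (θ w)) := by rw [h1, h2, e2]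
    _ = 0 := by ring

lemma factB (hθ : Measurable θ) (hatomμ : ∀ t : ℝ, μ {z | θ z = t} = 0)
    (hμs : μs = ((μ.prod ν) {p : (X × Y) × (X × Y) | θ p.1 < θ p.2}).toReal) (z : X × Y) :
    ∫ w, Fker μ ν θ μs z w ∂ν = 0 := by
  have hint1 : Integrable (fun w => (if θ z < θ w then (1 : ℝ) else 0)) ν := by
    refine integrable_of_bound ν 1 ?_ ?_
    · exact (Measurable.ite (measurableSet_lt measurable_const hθ)
        measurable_const measurable_const).aestronglyMeasurable
    · intro w; split <;> simp
  have hint2 : Integrable (fun w => cdfOf μ θ (θ w)) ν := by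
    refine integrable_of_bound ν 1 ?_ ?_
    · exact ((cdfOf_meas μ θ hθ).comp hθ).aestronglyMeasurable
    · intro w
      exact abs_le.2 ⟨by have := cdfOf_nonneg μ θ (θ w); linarith, cdfOf_le_one μ θ (θ w)⟩
  have h1 : ∫ w, (if θ z < θ w then (1 : ℝ) else 0) ∂ν = 1 - cdfOf ν θ (θ z) := by
    rw [int_ind_gt θ ν hθ (θ z), gt_toReal θ ν hθ (θ z)]
  have h2 : ∫ w, cdfOf μ θ (θ w) ∂ν = μs := by
    have hpt : (fun w => cdfOf μ θ (θ w)) = fun w => (μ {z' | θ z' < θ w}).toReal := by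
      funext w
      rw [show cdfOf μ θ (θ w) = (μ {z' | θ z' ≤ θ w}).toReal from rfl,
        ← lt_eq_le_meas μ θ hatomμ (θ w)]
    rw [hpt, fub_right μ ν θ hθ, ← hμs]
  have hsplit : (fun w => Fker μ ν θ μs z w)
      = fun w => ((if θ z < θ w then (1 : ℝ) else 0) - cdfOf μ θ (θ w))
        + (μs - (1 - cdfOf ν θ (θ z))) := by
    funext w; unfold Fker; ring
  have e2 : ∫ _w : X × Y, (μs - (1 - cdfOf ν θ (θ z))) ∂ν = μs - (1 - cdfOf ν θ (θ z)) := by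
    simp
  rw [hsplit]
  calc ∫ w, (((if θ z < θ w then (1 : ℝ) else 0) - cdfOf μ θ (θ w))
          + (μs - (1 - cdfOf ν θ (θ z)))) ∂ν
      = (∫ w, ((if θ z < θ w then (1 : ℝ) else 0) - cdfOf μ θ (θ w)) ∂ν)
        + ∫ _w : X × Y, (μs - (1 - cdfOf ν θ (θ z))) ∂ν := by
        exact integral_add (hint1.sub hint2) (integrable_const _)
    _ = ((∫ w, (if θ z < θ w then (1 : ℝ) else 0) ∂ν) - ∫ w, cdfOf μ θ (θ w) ∂ν)
        + ∫ _w : X × Y, (μs - (1 - cdfOf ν θ (θ z))) ∂ν := by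
        exact congrArg (fun r => r + ∫ _w : X × Y, (μs - (1 - cdfOf ν θ (θ z))) ∂ν)
          (integral_sub hint1 hint2)
    _ = ((1 - cdfOf ν θ (θ z)) - μs) + (μs - (1 - cdfOf ν θ (θ z))) := by rw [h1, h2, e2]
    _ = 0 := by ring

end Ker
lemma cycIdx_val {n : ℕ} (i : Fin n) :
    (cycIdx i).val = if i.val + 1 = n then 0 else i.val + 1 := by
  unfold cycIdx
  simp only
  by_cases h : i.val + 1 = n
  · rw [if_pos h, h, Nat.mod_self]
  · have hlt : i.val + 1 < n := lt_of_le_of_ne (Nat.succ_le_of_lt i.isLt) h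
    rw [Nat.mod_eq_of_lt hlt, if_neg h]

lemma cycIdx_inj {n : ℕ} : Function.Injective (cycIdx (n := n)) := by
  intro a b h
  apply Fin.ext
  have ha := a.isLt
  have hb := b.isLt
  have hv := congrArg Fin.val h
  rw [cycIdx_val, cycIdx_val] at hv
  split_ifs at hv <;> omega

lemma cycIdx_ne_self {n : ℕ} (hn : 2 ≤ n) (i : Fin n) : cycIdx i ≠ i := by
  intro h
  have hv := congrArg Fin.val h
  rw [cycIdx_val] at hv
  have := i.isLt
  split_ifs at hv <;> omega

-- classification
lemma classify {n : ℕ} (i j k l : Fin n) :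
    (i ≠ j ∧ i ≠ cycIdx j ∧ i ≠ k ∧ i ≠ l ∧ i ≠ cycIdx l) ∨
    (k ≠ i ∧ k ≠ j ∧ k ≠ cycIdx j ∧ k ≠ l ∧ k ≠ cycIdx l) ∨
    ((j ≠ i ∧ j ≠ k ∧ j ≠ l ∧ j ≠ cycIdx l) ∧
      (cycIdx j ≠ i ∧ cycIdx j ≠ k ∧ cycIdx j ≠ l ∧ cycIdx j ≠ cycIdx l)) ∨
    ((l ≠ i ∧ l ≠ k ∧ l ≠ j ∧ l ≠ cycIdx j) ∧
      (cycIdx l ≠ i ∧ cycIdx l ≠ k ∧ cycIdx l ≠ j ∧ cycIdx l ≠ cycIdx j)) ∨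
    (((i = j ∨ i = cycIdx j ∨ i = l ∨ i = cycIdx l) ∧
        (k = j ∨ k = cycIdx j ∨ k = l ∨ k = cycIdx l)) ∨
      (i = k ∧ (j = l ∨ j = cycIdx l ∨ cycIdx j = l ∨ cycIdx j = cycIdx l))) := by
  by_cases hik : i = k
  · by_cases hadj : j = l ∨ j = cycIdx l ∨ cycIdx j = l ∨ cycIdx j = cycIdx l
    · exact Or.inr (Or.inr (Or.inr (Or.inr (Or.inr ⟨hik, hadj⟩))))
    · push_neg at hadj
      by_cases hiS : i = j ∨ i = cycIdx j ∨ i = l ∨ i = cycIdx l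
      · refine Or.inr (Or.inr (Or.inr (Or.inr (Or.inl ⟨hiS, ?_⟩))))
        rw [← hik]; exact hiS
      · push_neg at hiS
        obtain ⟨h1, h2, h3, h4⟩ := hiS
        obtain ⟨a1, a2, a3, a4⟩ := hadj
        refine Or.inr (Or.inr (Or.inl ⟨⟨h1.symm, ?_, a1, a2⟩, ⟨h2.symm, ?_, a3, a4⟩⟩))
        · rw [← hik]; exact h1.symm
        · rw [← hik]; exact h2.symm
  · by_cases hiS : i = j ∨ i = cycIdx j ∨ i = l ∨ i = cycIdx l
    · by_cases hkS : k = j ∨ k = cycIdx j ∨ k = l ∨ k = cycIdx l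
      · exact Or.inr (Or.inr (Or.inr (Or.inr (Or.inl ⟨hiS, hkS⟩))))
      · push_neg at hkS
        obtain ⟨b1, b2, b3, b4⟩ := hkS
        exact Or.inr (Or.inl ⟨fun h => hik h.symm, b1, b2, b3, b4⟩)
    · push_neg at hiS
      obtain ⟨h1, h2, h3, h4⟩ := hiS
      exact Or.inl ⟨h1, h2, hik, h3, h4⟩

-- indicator sums
lemma sum_ind_mem {n : ℕ} (S : Finset (Fin n)) :
    ∑ i : Fin n, (if i ∈ S then (1 : ℝ) else 0) = S.card := by
  rw [Finset.sum_boole]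
  congr 1
  rw [Finset.filter_mem_eq_inter, Finset.univ_inter]

lemma card_S_le {n : ℕ} (j l : Fin n) :
    ({j, cycIdx j, l, cycIdx l} : Finset (Fin n)).card ≤ 4 := by
  apply le_trans (Finset.card_insert_le _ _)
  have h2 := Finset.card_insert_le (cycIdx j) ({l, cycIdx l} : Finset (Fin n))
  have h3 := Finset.card_insert_le l ({cycIdx l} : Finset (Fin n))
  simp only [Finset.card_singleton] at h3
  omega

lemma sum_ind_adj {n : ℕ} (hn : 2 ≤ n) (j : Fin n) :
    ∑ l : Fin n, (if (j = l ∨ j = cycIdx l ∨ cycIdx j = l ∨ cycIdx j = cycIdx l)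
      then (1 : ℝ) else 0) ≤ 4 := by
  have hptw : ∀ l : Fin n, (if (j = l ∨ j = cycIdx l ∨ cycIdx j = l ∨ cycIdx j = cycIdx l)
      then (1 : ℝ) else 0)
      ≤ (if j = l then (1:ℝ) else 0) + (if j = cycIdx l then (1:ℝ) else 0)
        + (if cycIdx j = l then (1:ℝ) else 0) + (if cycIdx j = cycIdx l then (1:ℝ) else 0) := by
    intro l
    by_cases h1 : j = l <;> by_cases h2 : j = cycIdx l <;> by_cases h3 : cycIdx j = l <;>
      by_cases h4 : cycIdx j = cycIdx l <;> simp [h1, h2, h3, h4] <;> split_ifs <;> norm_num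
  calc ∑ l : Fin n, (if (j = l ∨ j = cycIdx l ∨ cycIdx j = l ∨ cycIdx j = cycIdx l)
        then (1 : ℝ) else 0)
      ≤ ∑ l : Fin n, ((if j = l then (1:ℝ) else 0) + (if j = cycIdx l then (1:ℝ) else 0)
        + (if cycIdx j = l then (1:ℝ) else 0) + (if cycIdx j = cycIdx l then (1:ℝ) else 0)) :=
        Finset.sum_le_sum (fun l _ => hptw l)
    _ ≤ 4 := by
        simp only [Finset.sum_add_distrib]
        have e1 : ∑ l : Fin n, (if j = l then (1:ℝ) else 0) = 1 := by
          rw [Finset.sum_ite_eq Finset.univ j (fun _ => (1:ℝ))]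
          simp
        have e3 : ∑ l : Fin n, (if cycIdx j = l then (1:ℝ) else 0) = 1 := by
          rw [Finset.sum_ite_eq Finset.univ (cycIdx j) (fun _ => (1:ℝ))]
          simp
        have e2 : ∑ l : Fin n, (if j = cycIdx l then (1:ℝ) else 0) ≤ 1 := by
          rw [Finset.sum_boole]
          have hcard : (Finset.univ.filter (fun l : Fin n => j = cycIdx l)).card ≤ 1 := by
            apply Finset.card_le_one.2
            intro a ha b hb
            rw [Finset.mem_filter] at ha hb
            exact cycIdx_inj (ha.2.symm.trans hb.2)
          exact_mod_cast hcard
        have e4 : ∑ l : Fin n, (if cycIdx j = cycIdx l then (1:ℝ) else 0) = 1 := by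
          have hiff : ∀ l : Fin n, (cycIdx j = cycIdx l) ↔ (l = j) := by
            intro l
            exact ⟨fun h => (cycIdx_inj h).symm, fun h => by rw [h]⟩
          simp_rw [hiff]
          rw [Finset.sum_ite_eq' Finset.univ j (fun _ => (1:ℝ))]
          simp
        rw [e1, e3, e4]
        linarith

lemma sum4_reorder {n : ℕ} (h : Fin n → Fin n → Fin n → Fin n → ℝ) :
    ∑ i : Fin n, ∑ j : Fin n, ∑ k : Fin n, ∑ l : Fin n, h i j k l
      = ∑ j : Fin n, ∑ l : Fin n, ∑ i : Fin n, ∑ k : Fin n, h i j k l := by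
  rw [Finset.sum_comm]
  refine Finset.sum_congr rfl fun j _ => ?_
  calc ∑ i : Fin n, ∑ k : Fin n, ∑ l : Fin n, h i j k l
      = ∑ i : Fin n, ∑ l : Fin n, ∑ k : Fin n, h i j k l :=
        Finset.sum_congr rfl fun i _ => Finset.sum_comm
    _ = ∑ l : Fin n, ∑ i : Fin n, ∑ k : Fin n, h i j k l := Finset.sum_comm

lemma ite_and_mul_one (P Q : Prop) [Decidable P] [Decidable Q] :
    (if (P ∧ Q) then (1:ℝ) else 0) = (if P then (1:ℝ) else 0) * (if Q then (1:ℝ) else 0) := by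
  by_cases hP : P <;> by_cases hQ : Q <;> simp [hP, hQ]

lemma count_bound {n : ℕ} (hn : 3 ≤ n) (T : Fin n → Fin n → Fin n → Fin n → ℝ)
    (hTb : ∀ i j k l, |T i j k l| ≤ 16)
    (hvan : ∀ i j k l,
      ¬ ((i ∈ ({j, cycIdx j, l, cycIdx l} : Finset (Fin n))
            ∧ k ∈ ({j, cycIdx j, l, cycIdx l} : Finset (Fin n)))
        ∨ (i = k ∧ (j = l ∨ j = cycIdx l ∨ cycIdx j = l ∨ cycIdx j = cycIdx l)))
      → T i j k l = 0) :
    ∑ i : Fin n, ∑ j : Fin n, ∑ k : Fin n, ∑ l : Fin n, T i j k l ≤ 320 * (n : ℝ)^2 := by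
  classical
  have hn2 : 2 ≤ n := by omega
  set A : Fin n → Fin n → Fin n → Fin n → ℝ := fun i j k l =>
    (if i ∈ ({j, cycIdx j, l, cycIdx l} : Finset (Fin n)) then (1:ℝ) else 0)
      * (if k ∈ ({j, cycIdx j, l, cycIdx l} : Finset (Fin n)) then (1:ℝ) else 0) with hA
  set B : Fin n → Fin n → Fin n → Fin n → ℝ := fun i j k l =>
    (if i = k then (1:ℝ) else 0)
      * (if (j = l ∨ j = cycIdx l ∨ cycIdx j = l ∨ cycIdx j = cycIdx l) then (1:ℝ) else 0)
    with hB
  have hpt : ∀ i j k l, T i j k l ≤ 16 * A i j k l + 16 * B i j k l := by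
    intro i j k l
    by_cases hgood : ((i ∈ ({j, cycIdx j, l, cycIdx l} : Finset (Fin n))
            ∧ k ∈ ({j, cycIdx j, l, cycIdx l} : Finset (Fin n)))
        ∨ (i = k ∧ (j = l ∨ j = cycIdx l ∨ cycIdx j = l ∨ cycIdx j = cycIdx l)))
    · have hT16 : T i j k l ≤ 16 := le_trans (le_abs_self _) (hTb i j k l)
      have hAnn : 0 ≤ A i j k l := by
        rw [hA]; positivity
      have hBnn : 0 ≤ B i j k l := by
        rw [hB]; positivity
      rcases hgood with ⟨h1, h2⟩ | ⟨h1, h2⟩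
      · have : A i j k l = 1 := by rw [hA]; simp [h1, h2]
        rw [this]; linarith
      · have : B i j k l = 1 := by rw [hB]; simp [h1, h2]
        rw [this]; linarith
    · rw [hvan i j k l hgood]
      have hAnn : 0 ≤ A i j k l := by rw [hA]; positivity
      have hBnn : 0 ≤ B i j k l := by rw [hB]; positivity
      linarith
  have hcardS : ∀ j l : Fin n,
      ∑ i : Fin n, (if i ∈ ({j, cycIdx j, l, cycIdx l} : Finset (Fin n)) then (1:ℝ) else 0)
        ≤ 4 := by
    intro j l
    rw [sum_ind_mem]
    exact_mod_cast card_S_le j l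
  have hSA : ∑ j : Fin n, ∑ l : Fin n, ∑ i : Fin n, ∑ k : Fin n, A i j k l ≤ 16 * (n:ℝ)^2 := by
    have hinner : ∀ j l : Fin n, ∑ i : Fin n, ∑ k : Fin n, A i j k l ≤ 16 := by
      intro j l
      have : ∑ i : Fin n, ∑ k : Fin n, A i j k l
          = (∑ i : Fin n, (if i ∈ ({j, cycIdx j, l, cycIdx l} : Finset (Fin n))
              then (1:ℝ) else 0))
            * (∑ k : Fin n, (if k ∈ ({j, cycIdx j, l, cycIdx l} : Finset (Fin n))
              then (1:ℝ) else 0)) := by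
        rw [Finset.sum_mul_sum]
      rw [this]
      have h1 := hcardS j l
      have h2 : (0:ℝ) ≤ ∑ i : Fin n, (if i ∈ ({j, cycIdx j, l, cycIdx l} : Finset (Fin n))
          then (1:ℝ) else 0) := by positivity
      nlinarith
    calc ∑ j : Fin n, ∑ l : Fin n, ∑ i : Fin n, ∑ k : Fin n, A i j k l
        ≤ ∑ j : Fin n, ∑ l : Fin n, (16:ℝ) :=
          Finset.sum_le_sum (fun j _ => Finset.sum_le_sum (fun l _ => hinner j l))
      _ = 16 * (n:ℝ)^2 := by
          simp [Finset.sum_const, Finset.card_univ]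
          ring
  have hSB : ∑ j : Fin n, ∑ l : Fin n, ∑ i : Fin n, ∑ k : Fin n, B i j k l ≤ 4 * (n:ℝ)^2 := by
    have hinner : ∀ j l : Fin n, ∑ i : Fin n, ∑ k : Fin n, B i j k l
        = (n:ℝ) * (if (j = l ∨ j = cycIdx l ∨ cycIdx j = l ∨ cycIdx j = cycIdx l)
            then (1:ℝ) else 0) := by
      intro j l
      rw [hB]
      simp only
      have hstep : ∀ i : Fin n, ∑ k : Fin n, ((if i = k then (1:ℝ) else 0)
          * (if (j = l ∨ j = cycIdx l ∨ cycIdx j = l ∨ cycIdx j = cycIdx l) then (1:ℝ) else 0))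
          = (if (j = l ∨ j = cycIdx l ∨ cycIdx j = l ∨ cycIdx j = cycIdx l)
            then (1:ℝ) else 0) := by
        intro i
        rw [← Finset.sum_mul, Finset.sum_ite_eq Finset.univ i (fun _ => (1:ℝ))]
        simp
      calc ∑ i : Fin n, ∑ k : Fin n, ((if i = k then (1:ℝ) else 0)
            * (if (j = l ∨ j = cycIdx l ∨ cycIdx j = l ∨ cycIdx j = cycIdx l)
              then (1:ℝ) else 0))
          = ∑ _i : Fin n, (if (j = l ∨ j = cycIdx l ∨ cycIdx j = l ∨ cycIdx j = cycIdx l)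
              then (1:ℝ) else 0) := Finset.sum_congr rfl fun i _ => hstep i
        _ = (n:ℝ) * (if (j = l ∨ j = cycIdx l ∨ cycIdx j = l ∨ cycIdx j = cycIdx l)
              then (1:ℝ) else 0) := by
            rw [Finset.sum_const, Finset.card_univ, Fintype.card_fin, nsmul_eq_mul]
    calc ∑ j : Fin n, ∑ l : Fin n, ∑ i : Fin n, ∑ k : Fin n, B i j k l
        = ∑ j : Fin n, ∑ l : Fin n, (n:ℝ)
            * (if (j = l ∨ j = cycIdx l ∨ cycIdx j = l ∨ cycIdx j = cycIdx l)
              then (1:ℝ) else 0) :=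
          Finset.sum_congr rfl fun j _ => Finset.sum_congr rfl fun l _ => hinner j l
      _ = (n:ℝ) * ∑ j : Fin n, ∑ l : Fin n,
            (if (j = l ∨ j = cycIdx l ∨ cycIdx j = l ∨ cycIdx j = cycIdx l)
              then (1:ℝ) else 0) := by
          simp only [← Finset.mul_sum]
      _ ≤ (n:ℝ) * ∑ _j : Fin n, (4:ℝ) := by
          have hs : ∑ j : Fin n, ∑ l : Fin n,
              (if (j = l ∨ j = cycIdx l ∨ cycIdx j = l ∨ cycIdx j = cycIdx l)
                then (1:ℝ) else 0) ≤ ∑ _j : Fin n, (4:ℝ) :=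
            Finset.sum_le_sum (fun j _ => sum_ind_adj hn2 j)
          have hnn : (0:ℝ) ≤ (n:ℝ) := by positivity
          exact mul_le_mul_of_nonneg_left hs hnn
      _ = 4 * (n:ℝ)^2 := by
          rw [Finset.sum_const, Finset.card_univ, Fintype.card_fin, nsmul_eq_mul]
          ring
  calc ∑ i : Fin n, ∑ j : Fin n, ∑ k : Fin n, ∑ l : Fin n, T i j k l
      ≤ ∑ i : Fin n, ∑ j : Fin n, ∑ k : Fin n, ∑ l : Fin n,
          (16 * A i j k l + 16 * B i j k l) := by
        refine Finset.sum_le_sum fun i _ => Finset.sum_le_sum fun j _ =>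
          Finset.sum_le_sum fun k _ => Finset.sum_le_sum fun l _ => hpt i j k l
    _ = 16 * (∑ i : Fin n, ∑ j : Fin n, ∑ k : Fin n, ∑ l : Fin n, A i j k l)
        + 16 * (∑ i : Fin n, ∑ j : Fin n, ∑ k : Fin n, ∑ l : Fin n, B i j k l) := by
        simp only [Finset.sum_add_distrib, Finset.mul_sum]
    _ = 16 * (∑ j : Fin n, ∑ l : Fin n, ∑ i : Fin n, ∑ k : Fin n, A i j k l)
        + 16 * (∑ j : Fin n, ∑ l : Fin n, ∑ i : Fin n, ∑ k : Fin n, B i j k l) := by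
        rw [sum4_reorder A, sum4_reorder B]
    _ ≤ 16 * (16 * (n:ℝ)^2) + 16 * (4 * (n:ℝ)^2) := by
        have h4 : (0:ℝ) ≤ 16 := by norm_num
        gcongr
    _ = 320 * (n:ℝ)^2 := by ring

lemma prod_to_nu {X Y : Type*} [MeasurableSpace X] [MeasurableSpace Y]
    (μ : Measure (X × Y)) [IsProbabilityMeasure μ] (φ : X × Y → ℝ) (hφ : Measurable φ) :
    ∫ q : (X × Y) × (X × Y), φ (q.1.1, q.2.2) ∂(μ.prod μ)
      = ∫ w, φ w ∂((μ.map Prod.fst).prod (μ.map Prod.snd)) := by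
  rw [Measure.map_prod_map _ _ measurable_fst measurable_snd]
  rw [integral_map (measurable_fst.prodMap measurable_snd).aemeasurable
    hφ.aestronglyMeasurable]
  congr 1

lemma integral_sum4 {Ω : Type*} [MeasurableSpace Ω] (P : Measure Ω) {n : ℕ}
    (H : Fin n → Fin n → Fin n → Fin n → Ω → ℝ)
    (hint : ∀ i j k l, Integrable (H i j k l) P) :
    ∫ ω, ∑ i : Fin n, ∑ j : Fin n, ∑ k : Fin n, ∑ l : Fin n, H i j k l ω ∂P
      = ∑ i : Fin n, ∑ j : Fin n, ∑ k : Fin n, ∑ l : Fin n, ∫ ω, H i j k l ω ∂P := by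
  rw [integral_finset_sum _ (fun i _ => integrable_finset_sum _ (fun j _ =>
    integrable_finset_sum _ (fun k _ => integrable_finset_sum _ (fun l _ => hint i j k l))))]
  refine Finset.sum_congr rfl fun i _ => ?_
  rw [integral_finset_sum _ (fun j _ => integrable_finset_sum _ (fun k _ =>
    integrable_finset_sum _ (fun l _ => hint i j k l)))]
  refine Finset.sum_congr rfl fun j _ => ?_
  rw [integral_finset_sum _ (fun k _ => integrable_finset_sum _ (fun l _ => hint i j k l))]
  refine Finset.sum_congr rfl fun k _ => ?_
  rw [integral_finset_sum _ (fun l _ => hint i j k l)]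

lemma hD_iden {X Y : Type*} [MeasurableSpace X] [MeasurableSpace Y]
    (μ ν : Measure (X × Y)) (θ : X × Y → ℝ) (μs : ℝ) {n : ℕ} (hn : 3 ≤ n)
    (ω : Fin n → X × Y) :
    Rstat θ ω - μs - Rproj θ (cdfOf μ θ) (cdfOf ν θ) μs ω
      = ((n : ℝ) ^ 2)⁻¹ * ∑ i : Fin n, ∑ j : Fin n, Fker μ ν θ μs (ω i) (cyc ω j) := by
  have hnR : (n : ℝ) ≠ 0 := Nat.cast_ne_zero.2 (by omega)
  unfold Rstat Rproj Fker
  simp only [Finset.sum_sub_distrib, Finset.sum_add_distrib, Finset.sum_const,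
    Finset.card_univ, Fintype.card_fin, nsmul_eq_mul]
  simp only [← Finset.mul_sum]
  field_simp
  ring

end

/-- There is a universal constant `C` such that for any i.i.d. sample of size
`n ≥ 3` from a joint distribution `μ`, with cyclic permutation, and any fixed measurable
`θ̂` atomless under both the joint measure and the product measure,
`E[(R − μ* − R_μ)²] ≤ C·n⁻²`. -/

theorem stmt_5 :
    ∃ C : ℝ, 0 < C ∧
      ∀ (X Y : Type*) [MeasurableSpace X] [MeasurableSpace Y]
        (μ : Measure (X × Y)) [IsProbabilityMeasure μ]
        (ν : Measure (X × Y)), ν = (μ.map Prod.fst).prod (μ.map Prod.snd) →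
        ∀ (θ : X × Y → ℝ), Measurable θ →
          (∀ t : ℝ, μ {z | θ z = t} = 0) →
          (∀ t : ℝ, ν {z | θ z = t} = 0) →
          ∀ n : ℕ, 3 ≤ n →
          ∀ μs : ℝ, μs = ((μ.prod ν) {p : (X × Y) × (X × Y) | θ p.1 < θ p.2}).toReal →
          (∫ ω, (Rstat θ ω - μs - Rproj θ (cdfOf μ θ) (cdfOf ν θ) μs ω) ^ 2
              ∂(Measure.pi fun _ : Fin n => μ))
            ≤ C / (n : ℝ) ^ 2 := by
  classical
  refine ⟨320, by norm_num, ?_⟩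
  intro X Y mX mY μ instμ ν hν θ hθ hatomμ hatomν n hn μs hμs
  haveI h1 : IsProbabilityMeasure (μ.map (Prod.fst : X × Y → X)) :=
    Measure.isProbabilityMeasure_map measurable_fst.aemeasurable
  haveI h2 : IsProbabilityMeasure (μ.map (Prod.snd : X × Y → Y)) :=
    Measure.isProbabilityMeasure_map measurable_snd.aemeasurable
  haveI hνP : IsProbabilityMeasure ν := by rw [hν]; infer_instance
  have hn2 : 2 ≤ n := by omega
  have hnR : (0:ℝ) < (n:ℝ) := by
    have : 0 < n := by omega
    exact_mod_cast this
  have hμs0 : 0 ≤ μs := by rw [hμs]; exact ENNReal.toReal_nonneg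
  have hμs1 : μs ≤ 1 := by rw [hμs]; exact toReal_prob_le_one _ _
  have hfm : Measurable (fun q : (X × Y) × (X × Y) => Fker μ ν θ μs q.1 q.2) :=
    Fker_meas μ ν θ μs hθ
  have hfb : ∀ z w, |Fker μ ν θ μs z w| ≤ 4 := Fker_bound μ ν θ μs hμs0 hμs1
  have hfA : ∀ w, ∫ z, Fker μ ν θ μs z w ∂μ = 0 := factA μ ν θ μs hθ hatomμ hμs
  have hfB : ∀ z, ∫ w, Fker μ ν θ μs z w ∂ν = 0 := factB μ ν θ μs hθ hatomμ hμs
  -- coordinate measurability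
  have hcyc : ∀ b : Fin n, Measurable (fun ω : Fin n → X × Y => cyc ω b) := fun b =>
    (measurable_fst.comp (measurable_pi_apply b)).prodMk
      (measurable_snd.comp (measurable_pi_apply (cycIdx b)))
  have hone : ∀ a b : Fin n,
      Measurable (fun ω : Fin n → X × Y => Fker μ ν θ μs (ω a) (cyc ω b)) := fun a b =>
    hfm.comp ((measurable_pi_apply a).prodMk (hcyc b))
  have hterm_meas : ∀ a b c d : Fin n, Measurable (fun ω : Fin n → X × Y =>
      Fker μ ν θ μs (ω a) (cyc ω b) * Fker μ ν θ μs (ω c) (cyc ω d)) := fun a b c d =>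
    (hone a b).mul (hone c d)
  have hterm_b : ∀ (a b c d : Fin n) (ω : Fin n → X × Y),
      |Fker μ ν θ μs (ω a) (cyc ω b) * Fker μ ν θ μs (ω c) (cyc ω d)| ≤ 16 := by
    intro a b c d ω
    rw [abs_mul]
    have i1 := hfb (ω a) (cyc ω b)
    have i2 := hfb (ω c) (cyc ω d)
    have j1 := abs_nonneg (Fker μ ν θ μs (ω a) (cyc ω b))
    have j2 := abs_nonneg (Fker μ ν θ μs (ω c) (cyc ω d))
    nlinarith
  have hterm_int : ∀ a b c d : Fin n, Integrable (fun ω : Fin n → X × Y =>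
      Fker μ ν θ μs (ω a) (cyc ω b) * Fker μ ν θ μs (ω c) (cyc ω d))
      (Measure.pi fun _ : Fin n => μ) := fun a b c d =>
    integrable_of_bound _ 16 (hterm_meas a b c d).aestronglyMeasurable (hterm_b a b c d)
  set T : Fin n → Fin n → Fin n → Fin n → ℝ := fun i j k l =>
    ∫ ω, Fker μ ν θ μs (ω i) (cyc ω j) * Fker μ ν θ μs (ω k) (cyc ω l)
      ∂(Measure.pi fun _ : Fin n => μ) with hT
  have hTb : ∀ i j k l, |T i j k l| ≤ 16 := by
    intro i j k l
    rw [hT]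
    calc |∫ ω, Fker μ ν θ μs (ω i) (cyc ω j) * Fker μ ν θ μs (ω k) (cyc ω l)
          ∂(Measure.pi fun _ : Fin n => μ)|
        = ‖∫ ω, Fker μ ν θ μs (ω i) (cyc ω j) * Fker μ ν θ μs (ω k) (cyc ω l)
          ∂(Measure.pi fun _ : Fin n => μ)‖ := (Real.norm_eq_abs _).symm
      _ ≤ ∫ ω, ‖Fker μ ν θ μs (ω i) (cyc ω j) * Fker μ ν θ μs (ω k) (cyc ω l)‖
          ∂(Measure.pi fun _ : Fin n => μ) := norm_integral_le_integral_norm _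
      _ ≤ ∫ _ω, (16:ℝ) ∂(Measure.pi fun _ : Fin n => μ) := by
          refine integral_mono ((hterm_int i j k l).norm) (integrable_const _) ?_
          intro ω
          dsimp only
          rw [Real.norm_eq_abs]
          exact hterm_b i j k l ω
      _ = 16 := by simp
  -- vanishing
  have hTvan : ∀ i j k l : Fin n,
      ¬ ((i ∈ ({j, cycIdx j, l, cycIdx l} : Finset (Fin n))
            ∧ k ∈ ({j, cycIdx j, l, cycIdx l} : Finset (Fin n)))
        ∨ (i = k ∧ (j = l ∨ j = cycIdx l ∨ cycIdx j = l ∨ cycIdx j = cycIdx l)))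
      → T i j k l = 0 := by
    intro i j k l hbad
    rcases classify i j k l with ha | hb | hc | hd | hgood
    · -- integrate out coordinate i
      obtain ⟨ha1, ha2, ha3, ha4, ha5⟩ := ha
      rw [hT]
      refine vanish_single μ i
        (fun z ω => Fker μ ν θ μs z (cyc ω j) * Fker μ ν θ μs (ω k) (cyc ω l)) ?_ 16 ?_ ?_ ?_
      · exact (hfm.comp (measurable_fst.prodMk ((hcyc j).comp measurable_snd))).mul
          (hfm.comp (((measurable_pi_apply k).comp measurable_snd).prodMk
            ((hcyc l).comp measurable_snd)))
      · intro z ω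
        rw [abs_mul]
        have i1 := hfb z (cyc ω j)
        have i2 := hfb (ω k) (cyc ω l)
        have j1 := abs_nonneg (Fker μ ν θ μs z (cyc ω j))
        have j2 := abs_nonneg (Fker μ ν θ μs (ω k) (cyc ω l))
        nlinarith
      · intro z ω ω' hagree
        have e1 : cyc ω j = cyc ω' j := by
          unfold cyc
          rw [hagree j (Ne.symm ha1), hagree (cycIdx j) (Ne.symm ha2)]
        have e2 : ω k = ω' k := hagree k (Ne.symm ha3)
        have e3 : cyc ω l = cyc ω' l := by
          unfold cyc
          rw [hagree l (Ne.symm ha4), hagree (cycIdx l) (Ne.symm ha5)]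
        rw [e1, e2, e3]
      · intro ω
        rw [integral_mul_const, hfA (cyc ω j), zero_mul]
    · -- integrate out coordinate k
      obtain ⟨hb1, hb2, hb3, hb4, hb5⟩ := hb
      rw [hT]
      refine vanish_single μ k
        (fun z ω => Fker μ ν θ μs (ω i) (cyc ω j) * Fker μ ν θ μs z (cyc ω l)) ?_ 16 ?_ ?_ ?_
      · exact (hfm.comp (((measurable_pi_apply i).comp measurable_snd).prodMk
          ((hcyc j).comp measurable_snd))).mul
          (hfm.comp (measurable_fst.prodMk ((hcyc l).comp measurable_snd)))
      · intro z ω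
        rw [abs_mul]
        have i1 := hfb (ω i) (cyc ω j)
        have i2 := hfb z (cyc ω l)
        have j1 := abs_nonneg (Fker μ ν θ μs (ω i) (cyc ω j))
        have j2 := abs_nonneg (Fker μ ν θ μs z (cyc ω l))
        nlinarith
      · intro z ω ω' hagree
        have e1 : ω i = ω' i := hagree i (Ne.symm hb1)
        have e2 : cyc ω j = cyc ω' j := by
          unfold cyc
          rw [hagree j (Ne.symm hb2), hagree (cycIdx j) (Ne.symm hb3)]
        have e3 : cyc ω l = cyc ω' l := by
          unfold cyc
          rw [hagree l (Ne.symm hb4), hagree (cycIdx l) (Ne.symm hb5)]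
        rw [e1, e2, e3]
      · intro ω
        rw [integral_const_mul, hfA (cyc ω l), mul_zero]
    · -- integrate out coordinates j, j+1
      obtain ⟨⟨hc1, hc2, hc3, hc4⟩, hc5, hc6, hc7, hc8⟩ := hc
      rw [hT]
      refine vanish_pair μ j (cycIdx j) (Ne.symm (cycIdx_ne_self hn2 j))
        (fun z₁ z₂ ω => Fker μ ν θ μs (ω i) (z₁.1, z₂.2)
          * Fker μ ν θ μs (ω k) (cyc ω l)) ?_ 16 ?_ ?_ ?_
      · have g1 : Measurable (fun q : ((X × Y) × (X × Y)) × (Fin n → X × Y) =>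
            ((q.2 i : X × Y), ((q.1.1.1, q.1.2.2) : X × Y))) :=
          ((measurable_pi_apply i).comp measurable_snd).prodMk
            ((measurable_fst.comp (measurable_fst.comp measurable_fst)).prodMk
              (measurable_snd.comp (measurable_snd.comp measurable_fst)))
        have g2 : Measurable (fun q : ((X × Y) × (X × Y)) × (Fin n → X × Y) =>
            ((q.2 k : X × Y), (cyc q.2 l : X × Y))) :=
          ((measurable_pi_apply k).comp measurable_snd).prodMk ((hcyc l).comp measurable_snd)
        exact (hfm.comp g1).mul (hfm.comp g2)
      · intro z₁ z₂ ω
        rw [abs_mul]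
        have i1 := hfb (ω i) (z₁.1, z₂.2)
        have i2 := hfb (ω k) (cyc ω l)
        have j1 := abs_nonneg (Fker μ ν θ μs (ω i) (z₁.1, z₂.2))
        have j2 := abs_nonneg (Fker μ ν θ μs (ω k) (cyc ω l))
        nlinarith
      · intro z₁ z₂ ω ω' hagree
        have e1 : ω i = ω' i := hagree i (Ne.symm hc1) (Ne.symm hc5)
        have e2 : ω k = ω' k := hagree k (Ne.symm hc2) (Ne.symm hc6)
        have e3 : cyc ω l = cyc ω' l := by
          unfold cyc
          rw [hagree l (Ne.symm hc3) (Ne.symm hc7),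
            hagree (cycIdx l) (Ne.symm hc4) (Ne.symm hc8)]
        rw [e1, e2, e3]
      · intro ω
        rw [integral_mul_const]
        have hφ : Measurable (fun w : X × Y => Fker μ ν θ μs (ω i) w) :=
          hfm.comp (measurable_const.prodMk measurable_id)
        rw [show (∫ q : (X × Y) × (X × Y), Fker μ ν θ μs (ω i) (q.1.1, q.2.2) ∂(μ.prod μ))
            = ∫ w, Fker μ ν θ μs (ω i) w ∂((μ.map Prod.fst).prod (μ.map Prod.snd)) from
          prod_to_nu μ (fun w => Fker μ ν θ μs (ω i) w) hφ, ← hν, hfB (ω i), zero_mul]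
    · -- integrate out coordinates l, l+1
      obtain ⟨⟨hd1, hd2, hd3, hd4⟩, hd5, hd6, hd7, hd8⟩ := hd
      rw [hT]
      refine vanish_pair μ l (cycIdx l) (Ne.symm (cycIdx_ne_self hn2 l))
        (fun z₁ z₂ ω => Fker μ ν θ μs (ω i) (cyc ω j)
          * Fker μ ν θ μs (ω k) (z₁.1, z₂.2)) ?_ 16 ?_ ?_ ?_
      · have g1 : Measurable (fun q : ((X × Y) × (X × Y)) × (Fin n → X × Y) =>
            ((q.2 i : X × Y), (cyc q.2 j : X × Y))) :=
          ((measurable_pi_apply i).comp measurable_snd).prodMk ((hcyc j).comp measurable_snd)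
        have g2 : Measurable (fun q : ((X × Y) × (X × Y)) × (Fin n → X × Y) =>
            ((q.2 k : X × Y), ((q.1.1.1, q.1.2.2) : X × Y))) :=
          ((measurable_pi_apply k).comp measurable_snd).prodMk
            ((measurable_fst.comp (measurable_fst.comp measurable_fst)).prodMk
              (measurable_snd.comp (measurable_snd.comp measurable_fst)))
        exact (hfm.comp g1).mul (hfm.comp g2)
      · intro z₁ z₂ ω
        rw [abs_mul]
        have i1 := hfb (ω i) (cyc ω j)
        have i2 := hfb (ω k) (z₁.1, z₂.2)
        have j1 := abs_nonneg (Fker μ ν θ μs (ω i) (cyc ω j))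
        have j2 := abs_nonneg (Fker μ ν θ μs (ω k) (z₁.1, z₂.2))
        nlinarith
      · intro z₁ z₂ ω ω' hagree
        have e1 : ω i = ω' i := hagree i (Ne.symm hd1) (Ne.symm hd5)
        have e2 : ω k = ω' k := hagree k (Ne.symm hd2) (Ne.symm hd6)
        have e3 : cyc ω j = cyc ω' j := by
          unfold cyc
          rw [hagree j (Ne.symm hd3) (Ne.symm hd7),
            hagree (cycIdx j) (Ne.symm hd4) (Ne.symm hd8)]
        rw [e1, e2, e3]
      · intro ω
        rw [integral_const_mul]
        have hφ : Measurable (fun w : X × Y => Fker μ ν θ μs (ω k) w) :=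
          hfm.comp (measurable_const.prodMk measurable_id)
        rw [show (∫ q : (X × Y) × (X × Y), Fker μ ν θ μs (ω k) (q.1.1, q.2.2) ∂(μ.prod μ))
            = ∫ w, Fker μ ν θ μs (ω k) w ∂((μ.map Prod.fst).prod (μ.map Prod.snd)) from
          prod_to_nu μ (fun w => Fker μ ν θ μs (ω k) w) hφ, ← hν, hfB (ω k), mul_zero]
    · exact absurd (by simpa using hgood) hbad
  -- pointwise square expansion
  have hsq : ∀ ω : Fin n → X × Y,
      (Rstat θ ω - μs - Rproj θ (cdfOf μ θ) (cdfOf ν θ) μs ω) ^ 2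
      = (((n : ℝ) ^ 2)⁻¹) ^ 2 * ∑ i : Fin n, ∑ j : Fin n, ∑ k : Fin n, ∑ l : Fin n,
          Fker μ ν θ μs (ω i) (cyc ω j) * Fker μ ν θ μs (ω k) (cyc ω l) := by
    intro ω
    rw [hD_iden μ ν θ μs hn ω, mul_pow]
    congr 1
    rw [sq, Finset.sum_mul_sum]
    refine Finset.sum_congr rfl fun i _ => ?_
    rw [Finset.sum_comm]
    refine Finset.sum_congr rfl fun j _ => ?_
    rw [Finset.sum_mul_sum]
  -- integrate
  have key : (∫ ω, (Rstat θ ω - μs - Rproj θ (cdfOf μ θ) (cdfOf ν θ) μs ω) ^ 2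
        ∂(Measure.pi fun _ : Fin n => μ))
      = (((n : ℝ) ^ 2)⁻¹) ^ 2 * ∑ i : Fin n, ∑ j : Fin n, ∑ k : Fin n, ∑ l : Fin n,
          T i j k l := by
    calc (∫ ω, (Rstat θ ω - μs - Rproj θ (cdfOf μ θ) (cdfOf ν θ) μs ω) ^ 2
          ∂(Measure.pi fun _ : Fin n => μ))
        = ∫ ω, (((n : ℝ) ^ 2)⁻¹) ^ 2 * ∑ i : Fin n, ∑ j : Fin n, ∑ k : Fin n, ∑ l : Fin n,
            Fker μ ν θ μs (ω i) (cyc ω j) * Fker μ ν θ μs (ω k) (cyc ω l)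
          ∂(Measure.pi fun _ : Fin n => μ) := by
          congr 1; ext ω; rw [hsq ω]
      _ = (((n : ℝ) ^ 2)⁻¹) ^ 2 * ∫ ω, ∑ i : Fin n, ∑ j : Fin n, ∑ k : Fin n, ∑ l : Fin n,
            Fker μ ν θ μs (ω i) (cyc ω j) * Fker μ ν θ μs (ω k) (cyc ω l)
          ∂(Measure.pi fun _ : Fin n => μ) := integral_const_mul _ _
      _ = (((n : ℝ) ^ 2)⁻¹) ^ 2 * ∑ i : Fin n, ∑ j : Fin n, ∑ k : Fin n, ∑ l : Fin n,
            T i j k l := by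
          rw [integral_sum4 _ _ (fun i j k l => hterm_int i j k l)]
  rw [key]
  have hcount : ∑ i : Fin n, ∑ j : Fin n, ∑ k : Fin n, ∑ l : Fin n, T i j k l
      ≤ 320 * (n : ℝ)^2 := count_bound hn T hTb hTvan
  calc (((n : ℝ) ^ 2)⁻¹) ^ 2 * ∑ i : Fin n, ∑ j : Fin n, ∑ k : Fin n, ∑ l : Fin n, T i j k l
      ≤ (((n : ℝ) ^ 2)⁻¹) ^ 2 * (320 * (n : ℝ)^2) := by
        apply mul_le_mul_of_nonneg_left hcount
        positivity
    _ = 320 / (n : ℝ) ^ 2 := by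
        field_simp
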